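/- Let q be a prime power and let A ∈ 𝔽_q[T] be a monic polynomial. Then the sum over monic divisors B of A of μ(B)·Ω(B) equals −1 if A is a (nonempty) product of primes all of the same degree, and equals 0 otherwise. -/

import Mathlib

open Filter Topology Polynomial Asymptotics
open scoped Classical

variable {F : Type} [Field F] [Fintype F]

/-- The Möbius function for (monic) polynomials over a finite field:
`μ(A) = 1` if `A = 1`, `(-1)^k` if `A` is a product of `k` distinct primes, `0` otherwise. -/
noncomputable def muFF (A : Polynomial F) : ℤ :=
  if Squarefree A then
    (-1) ^ (UniqueFactorizationMonoid.normalizedFactors A).toFinset.card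
  else 0

/-- `𝒩(A)`: the set of degrees of prime (monic irreducible) divisors of `A`. -/
noncomputable def NSet (A : Polynomial F) : Finset ℕ :=
  (Finset.range (A.natDegree + 1)).filter fun d =>
    ∃ P : Polynomial F, P.Monic ∧ Irreducible P ∧ P ∣ A ∧ P.natDegree = d

/-- `Ω(A)`: the number of distinct degrees of prime divisors of `A`. -/
noncomputable def OmegaFF (A : Polynomial F) : ℕ := (NSet A).card

/-- `δ_k(A)`: the `k`-th smallest element of `𝒩(A)` (and `0` if `k > Ω(A)`). -/
noncomputable def deltaSmall (k : ℕ) (A : Polynomial F) : ℕ :=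
  ((NSet A).sort (· ≤ ·)).getD (k - 1) 0

/-- `Δ_k(A)`: the `k`-th largest element of `𝒩(A)` (and `0` if `k > Ω(A)`). -/
noncomputable def DeltaLarge (k : ℕ) (A : Polynomial F) : ℕ :=
  (((NSet A).sort (· ≤ ·)).reverse).getD (k - 1) 0

/-- `P_min(A)`: the set of prime divisors of `A` of minimal degree `δ₁(A)`. -/
noncomputable def Pmin (A : Polynomial F) : Set (Polynomial F) :=
  {P | P.Monic ∧ Irreducible P ∧ P ∣ A ∧ P.natDegree = deltaSmall 1 A}

/-- `𝒟(𝒮)`: monic polynomials whose set of minimal-degree prime divisors is a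
singleton `{P}` with `P ∈ 𝒮`. -/
noncomputable def DSet (S : Set (Polynomial F)) : Set (Polynomial F) :=
  {A | A.Monic ∧ ∃ P ∈ S, Pmin A = {P}}

/-- `Q_𝒮^{(k)}(A) = #{P ∈ 𝒮 : P ∣ A, deg P = Δ_k(A)}`. -/
noncomputable def QS (S : Set (Polynomial F)) (k : ℕ) (A : Polynomial F) : ℕ :=
  {P | P ∈ S ∧ P ∣ A ∧ P.natDegree = DeltaLarge k A}.ncard

section Aux
open UniqueFactorizationMonoid
set_option linter.unusedSectionVars false

lemma comb {α : Type*} [DecidableEq α] (X : Finset α) (g : α → ℕ) :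
    ∑ S ∈ X.powerset, (-1:ℤ)^S.card * ((S.image g).card : ℤ)
      = ∑ d ∈ X.image g, ((if X = ∅ then (1:ℤ) else 0)
          - (if X.filter (fun p => g p ≠ d) = ∅ then 1 else 0)) := by
  have step1 : ∀ S ∈ X.powerset, ((S.image g).card : ℤ)
      = ∑ d ∈ X.image g, (if d ∈ S.image g then (1:ℤ) else 0) := by
    intro S hS
    rw [Finset.sum_ite_mem, Finset.inter_eq_right.mpr
      (Finset.image_subset_image (Finset.mem_powerset.mp hS))]
    simp
  rw [Finset.sum_congr rfl fun S hS => by rw [step1 S hS, Finset.mul_sum]]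
  rw [Finset.sum_comm]
  refine Finset.sum_congr rfl fun d _ => ?_
  have key : ∀ S ∈ X.powerset, (-1:ℤ)^S.card * (if d ∈ S.image g then (1:ℤ) else 0)
      = (-1:ℤ)^S.card - (if S ∈ (X.filter (fun p => g p ≠ d)).powerset
          then (-1:ℤ)^S.card else 0) := by
    intro S hS
    have hiff : d ∉ S.image g ↔ S ∈ (X.filter (fun p => g p ≠ d)).powerset := by
      rw [Finset.mem_powerset]
      constructor
      · intro h p hp
        exact Finset.mem_filter.mpr ⟨Finset.mem_powerset.mp hS hp,
          fun he => h (Finset.mem_image.mpr ⟨p, hp, he⟩)⟩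
      · rintro h hd
        obtain ⟨p, hp, rfl⟩ := Finset.mem_image.mp hd
        exact (Finset.mem_filter.mp (h hp)).2 rfl
    by_cases hd : d ∈ S.image g
    · rw [if_pos hd, if_neg (fun h => (hiff.mpr h) hd), mul_one, sub_zero]
    · rw [if_neg hd, if_pos (hiff.mp hd), mul_zero, sub_self]
  rw [Finset.sum_congr rfl key, Finset.sum_sub_distrib,
    Finset.sum_powerset_neg_one_pow_card, Finset.sum_ite_mem,
    Finset.inter_eq_right.mpr (Finset.powerset_mono.mpr (Finset.filter_subset _ _)),
    Finset.sum_powerset_neg_one_pow_card]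

lemma mem_PF {A : Polynomial F} (hA : A ≠ 0) (P : Polynomial F) :
    P ∈ (normalizedFactors A).toFinset ↔ P.Monic ∧ Irreducible P ∧ P ∣ A := by
  rw [Multiset.mem_toFinset]
  constructor
  · intro h
    have hn := normalize_normalized_factor P h
    have hirr := irreducible_of_normalized_factor P h
    refine ⟨?_, hirr, dvd_of_mem_normalizedFactors h⟩
    have := Polynomial.monic_normalize (p := P) hirr.ne_zero
    rwa [hn] at this
  · rintro ⟨hm, hi, hd⟩
    obtain ⟨Q, hQ, hassoc⟩ := exists_mem_normalizedFactors_of_dvd hA hi hd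
    have hQm : Q.Monic := by
      have := Polynomial.monic_normalize (p := Q)
        (irreducible_of_normalized_factor Q hQ).ne_zero
      rwa [normalize_normalized_factor Q hQ] at this
    rwa [Polynomial.eq_of_monic_of_associated hm hQm hassoc]

lemma NSet_eq {B : Polynomial F} (hB : B ≠ 0) :
    NSet B = (normalizedFactors B).toFinset.image Polynomial.natDegree := by
  ext d
  simp only [NSet, Finset.mem_filter, Finset.mem_range, Finset.mem_image, mem_PF hB]
  constructor
  · rintro ⟨-, P, hm, hi, hd, rfl⟩
    exact ⟨P, ⟨hm, hi, hd⟩, rfl⟩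
  · rintro ⟨P, ⟨hm, hi, hd⟩, rfl⟩
    exact ⟨Nat.lt_succ_of_le (Polynomial.natDegree_le_of_dvd hd hB), P, hm, hi, hd, rfl⟩

lemma prod_facts {A : Polynomial F} (hA : A ≠ 0) {S : Finset (Polynomial F)}
    (hS : S ⊆ (normalizedFactors A).toFinset) :
    (∏ p ∈ S, p).Monic ∧ (∏ p ∈ S, p) ∣ A ∧ Squarefree (∏ p ∈ S, p) ∧
      normalizedFactors (∏ p ∈ S, p) = S.val := by
  have hmem : ∀ p ∈ S, p ∈ normalizedFactors A := fun p hp =>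
    Multiset.mem_toFinset.mp (hS hp)
  have hmon : ∀ p ∈ S, (p : Polynomial F).Monic := fun p hp =>
    ((mem_PF hA p).mp (hS hp)).1
  have hirr : ∀ p ∈ S.val, Irreducible p := fun p hp =>
    ((mem_PF hA p).mp (hS hp)).2.1
  have hBm : (∏ p ∈ S, p).Monic := Polynomial.monic_prod_of_monic _ _ hmon
  have hprod : (∏ p ∈ S, p) = S.val.prod := by
    rw [Finset.prod_eq_multiset_prod, Multiset.map_id']
  have hnf : normalizedFactors (∏ p ∈ S, p) = S.val := by
    rw [hprod, normalizedFactors_prod_eq _ hirr]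
    rw [Multiset.map_congr rfl fun p hp => normalize_normalized_factor p (hmem p hp),
      Multiset.map_id']
  refine ⟨hBm, ?_, ?_, hnf⟩
  · rw [dvd_iff_normalizedFactors_le_normalizedFactors hBm.ne_zero hA, hnf]
    exact (Multiset.le_iff_subset S.nodup).mpr fun p hp => hmem p hp
  · rw [squarefree_iff_nodup_normalizedFactors hBm.ne_zero, hnf]
    exact S.nodup

lemma sqf_div {A B : Polynomial F} (hA : A ≠ 0) (hBm : B.Monic) (hsq : Squarefree B)
    (hd : B ∣ A) :
    (normalizedFactors B).toFinset ⊆ (normalizedFactors A).toFinset ∧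
      ∏ p ∈ (normalizedFactors B).toFinset, p = B := by
  have hB0 := hBm.ne_zero
  have hnd : (normalizedFactors B).Nodup :=
    (squarefree_iff_nodup_normalizedFactors hB0).mp hsq
  constructor
  · intro p hp
    rw [Multiset.mem_toFinset] at hp ⊢
    exact Multiset.mem_of_le
      ((dvd_iff_normalizedFactors_le_normalizedFactors hB0 hA).mp hd) hp
  · have hval : (normalizedFactors B).toFinset.val = normalizedFactors B :=
      Multiset.dedup_eq_self.mpr hnd
    have hprod : ∏ p ∈ (normalizedFactors B).toFinset, p = (normalizedFactors B).prod := by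
      rw [Finset.prod_eq_multiset_prod, hval, Multiset.map_id']
    have hmon : (∏ p ∈ (normalizedFactors B).toFinset, p).Monic :=
      Polynomial.monic_prod_of_monic _ _ fun p hp => ((mem_PF hB0 p).mp hp).1
    rw [hprod] at hmon ⊢
    exact Polynomial.eq_of_monic_of_associated hmon hBm (prod_normalizedFactors hB0)

end Aux

/-- Corollary 4.4: `∑_{B ∣ A} μ(B) Ω(B)` equals `-1` if `A` is a nonempty product of primes
all of the same degree, and `0` otherwise. -/
theorem stmt6 (A : Polynomial F) (hA : A.Monic) :
    ∑ᶠ B ∈ {B : Polynomial F | B.Monic ∧ B ∣ A}, (muFF B : ℤ) * (OmegaFF B : ℤ)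
      = if A ≠ 1 ∧ ∃ d : ℕ, ∀ P : Polynomial F,
            P.Monic → Irreducible P → P ∣ A → P.natDegree = d
        then -1 else 0 := by
  open UniqueFactorizationMonoid in
  have hA0 : A ≠ 0 := hA.ne_zero
  haveI : Fintype (Polynomial F)ˣ :=
    Fintype.ofInjective (fun u : (Polynomial F)ˣ => ((u : Polynomial F)).coeff 0) (by
      intro u v h
      refine Units.ext ?_
      have hu := Polynomial.eq_C_of_natDegree_eq_zero
        (Polynomial.natDegree_eq_zero_of_isUnit u.isUnit)
      have hv := Polynomial.eq_C_of_natDegree_eq_zero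
        (Polynomial.natDegree_eq_zero_of_isUnit v.isUnit)
      rw [hu, hv]
      exact congrArg Polynomial.C h)
  haveI : Fintype {x : Polynomial F // x ∣ A} :=
    UniqueFactorizationMonoid.fintypeSubtypeDvd A hA0
  have hdivfin : {B : Polynomial F | B ∣ A}.Finite := by
    rw [← Subtype.range_coe_subtype]
    exact Set.finite_range _
  have hfin : {B : Polynomial F | B.Monic ∧ B ∣ A}.Finite :=
    Set.Finite.subset hdivfin fun B hB => hB.2
  rw [← Set.Finite.coe_toFinset hfin, finsum_mem_coe_finset]
  set X := (UniqueFactorizationMonoid.normalizedFactors A).toFinset with hX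
  -- restrict to squarefree divisors
  have h1 : ∑ B ∈ hfin.toFinset, (muFF B : ℤ) * (OmegaFF B : ℤ)
      = ∑ B ∈ hfin.toFinset.filter Squarefree, (muFF B : ℤ) * (OmegaFF B : ℤ) := by
    refine (Finset.sum_filter_of_ne fun B _ h => ?_).symm
    by_contra hsq
    exact h (by rw [muFF, if_neg hsq, zero_mul])
  rw [h1]
  -- bijection with powerset of X
  have h2 : ∑ B ∈ hfin.toFinset.filter Squarefree, (muFF B : ℤ) * (OmegaFF B : ℤ)
      = ∑ S ∈ X.powerset, (-1:ℤ)^S.card * ((S.image Polynomial.natDegree).card : ℤ) := by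
    refine Finset.sum_nbij'
      (fun B => (UniqueFactorizationMonoid.normalizedFactors B).toFinset)
      (fun S => ∏ p ∈ S, p) ?_ ?_ ?_ ?_ ?_
    · intro B hB
      rw [Finset.mem_filter, Set.Finite.mem_toFinset] at hB
      exact Finset.mem_powerset.mpr (sqf_div hA0 hB.1.1 hB.2 hB.1.2).1
    · intro S hS
      obtain ⟨hm, hdvd, hsq, -⟩ := prod_facts hA0 (Finset.mem_powerset.mp hS)
      rw [Finset.mem_filter, Set.Finite.mem_toFinset]
      exact ⟨⟨hm, hdvd⟩, hsq⟩
    · intro B hB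
      rw [Finset.mem_filter, Set.Finite.mem_toFinset] at hB
      exact (sqf_div hA0 hB.1.1 hB.2 hB.1.2).2
    · intro S hS
      have hnf := (prod_facts hA0 (Finset.mem_powerset.mp hS)).2.2.2
      rw [hnf, Finset.val_toFinset]
    · intro B hB
      rw [Finset.mem_filter, Set.Finite.mem_toFinset] at hB
      have hB0 := hB.1.1.ne_zero
      rw [muFF, if_pos hB.2, OmegaFF, NSet_eq hB0]
  rw [h2, comb]
  -- X empty iff A = 1
  have hXone : X = ∅ ↔ A = 1 := by
    rw [hX, Multiset.toFinset_eq_empty]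
    constructor
    · intro h
      by_contra hne
      obtain ⟨p, hp⟩ := UniqueFactorizationMonoid.exists_mem_normalizedFactors hA0
        (fun hu => hne (hA.eq_one_of_isUnit hu))
      rw [h] at hp
      simp at hp
    · rintro rfl
      exact UniqueFactorizationMonoid.normalizedFactors_one
  by_cases hC : A ≠ 1 ∧ ∃ d : ℕ, ∀ P : Polynomial F,
      P.Monic → Irreducible P → P ∣ A → P.natDegree = d
  · rw [if_pos hC]
    obtain ⟨hne, d0, hall⟩ := hC
    have hXne : X ≠ ∅ := fun h => hne (hXone.mp h)
    have hdeg : ∀ p ∈ X, p.natDegree = d0 := fun p hp => by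
      obtain ⟨hm, hi, hd⟩ := (mem_PF hA0 p).mp hp
      exact hall p hm hi hd
    have himg : X.image Polynomial.natDegree = {d0} := by
      rw [Finset.image_congr (g := fun _ => d0) fun p hp => hdeg p hp]
      exact Finset.image_const (Finset.nonempty_iff_ne_empty.mpr hXne) d0
    rw [himg, Finset.sum_singleton, if_neg hXne, if_pos, zero_sub]
    exact Finset.filter_eq_empty_iff.mpr fun {p} hp h => h (hdeg p hp)
  · rw [if_neg hC]
    by_cases hone : A = 1
    · have : X = ∅ := hXone.mpr hone
      rw [this]
      simp
    · have hXne : X ≠ ∅ := fun h => hone (hXone.mp h)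
      push_neg at hC
      refine Finset.sum_eq_zero fun d hd => ?_
      obtain ⟨P, hm, hi, hdvd, hne⟩ := hC hone d
      have hflt : X.filter (fun p => Polynomial.natDegree p ≠ d) ≠ ∅ := by
        intro hemp
        have hPX : P ∈ X := (mem_PF hA0 P).mpr ⟨hm, hi, hdvd⟩
        exact (Finset.eq_empty_iff_forall_notMem.mp hemp P)
          (Finset.mem_filter.mpr ⟨hPX, hne⟩)
      rw [if_neg hXne, if_neg hflt, sub_zero]
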